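/- arXiv:1505.04638 — 4 statements merged into one kernel-verified Lean document; each statement's English description precedes it below -/
import Mathlib

section
/- Let H be a complex Hilbert space, let U and W be unitary operators on H satisfying the Weyl-type commutation relation U∘W = e^{iγ}·(W∘U) for some real γ, and let ψ ∈ H with ‖ψ‖ = 1. Then |⟨ψ, Uψ⟩|² + |⟨ψ, Wψ⟩|² ≤ B(γ), where B(γ) = 2/(1 + √((1 − cos γ)/2)). -/
open scoped InnerProductSpace ComplexConjugate


lemma aux_quad (t p q : ℝ) (ht0 : 0 ≤ t) (ht1 : t ≤ 1) (hp0 : 0 ≤ p) (hp1 : p ≤ 1)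
    (hq0 : 0 ≤ q) (hq1 : q ≤ 1) (hkey : t^2*(p*q) ≤ (1-p)*(1-q)) :
    p + q ≤ 2/(1+t) := by
  rw [le_div_iff₀ (by linarith)]
  rcases eq_or_lt_of_le ht0 with h | h
  · nlinarith
  · rcases le_or_gt (p+q) 0 with hs | hs
    · nlinarith
    · have hG : 0 < 2 - (1-t)*(p+q) := by nlinarith
      by_contra hX
      push_neg at hX
      have h1 : 0 < ((p+q)*(1+t) - 2) * (2 - (1-t)*(p+q)) :=
        mul_pos (by linarith) hG
      nlinarith [mul_nonneg (mul_nonneg (by nlinarith : (0:ℝ) ≤ 1 - t^2) (sq_nonneg (p-q))) (le_of_lt h), sq_nonneg (p-q), mul_nonneg (by nlinarith : (0:ℝ) ≤ 1 - t^2) (sq_nonneg (p-q))]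

lemma aux_norm_residual {H : Type*} [NormedAddCommGroup H] [InnerProductSpace ℂ H]
    (φ x : H) (hφ : ⟪φ, φ⟫_ℂ = 1) (hx : ⟪x, x⟫_ℂ = 1) :
    ‖x - ⟪φ, x⟫_ℂ • φ‖^2 = 1 - ‖⟪φ, x⟫_ℂ‖ ^ 2 := by
  set c : ℂ := ⟪φ, x⟫_ℂ with hc
  have hxφ : ⟪x, φ⟫_ℂ = (starRingEnd ℂ) c := (inner_conj_symm x φ).symm
  have h2 : c * (starRingEnd ℂ) c = ((‖c‖ : ℝ) : ℂ)^2 := by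
    rw [Complex.mul_conj, Complex.normSq_eq_norm_sq]; push_cast; ring
  have h1 : ⟪x - c • φ, x - c • φ⟫_ℂ = ((1 - ‖c‖ ^ 2 : ℝ) : ℂ) := by
    simp only [inner_sub_left, inner_sub_right, inner_smul_left, inner_smul_right,
      hφ, hx, hxφ, ← hc]
    push_cast
    linear_combination -h2
  rw [inner_self_eq_norm_sq_to_K] at h1
  have h3 : ((‖x - c • φ‖^2 : ℝ) : ℂ) = ((1 - ‖c‖^2 : ℝ) : ℂ) := by push_cast at h1 ⊢; exact h1
  exact Complex.ofReal_injective h3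

set_option maxHeartbeats 1000000

/-- **Uncertainty relation for a Weyl pair of unitaries.**
If `U` and `W` are unitary operators on a complex Hilbert space `H` satisfying the
Weyl-type commutation relation `U ∘ W = e^{iγ} • (W ∘ U)`, and `ψ` is a unit vector,
then `|⟨ψ, Uψ⟩|² + |⟨ψ, Wψ⟩|² ≤ B(γ)` with `B(γ) = 2/(1 + √((1 − cos γ)/2))`. -/
theorem weyl_pair_characteristic_uncertainty
    {H : Type*} [NormedAddCommGroup H] [InnerProductSpace ℂ H] [CompleteSpace H]
    (U W : H →L[ℂ] H)
    (hU_inner : ∀ x y : H, ⟪U x, U y⟫_ℂ = ⟪x, y⟫_ℂ) (hU_surj : Function.Surjective U)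
    (hW_inner : ∀ x y : H, ⟪W x, W y⟫_ℂ = ⟪x, y⟫_ℂ) (hW_surj : Function.Surjective W)
    (γ : ℝ)
    (hWeyl : U ∘L W = Complex.exp (Complex.I * γ) • (W ∘L U))
    (ψ : H) (hψ : ‖ψ‖ = 1) :
    ‖⟪ψ, U ψ⟫_ℂ‖ ^ 2 + ‖⟪ψ, W ψ⟫_ℂ‖ ^ 2
      ≤ 2 / (1 + Real.sqrt ((1 - Real.cos γ) / 2)) := by
  have hψ2 : ⟪ψ, ψ⟫_ℂ = 1 := by
    rw [inner_self_eq_norm_sq_to_K, hψ]; norm_num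
  set u : ℂ := ⟪ψ, U ψ⟫_ℂ with hu
  set w : ℂ := ⟪ψ, W ψ⟫_ℂ with hw
  set e : ℂ := Complex.exp (Complex.I * γ) with he
  set t : ℝ := Real.sqrt ((1 - Real.cos γ) / 2) with ht
  have hcos1 : -1 ≤ Real.cos γ := Real.neg_one_le_cos γ
  have hcos2 : Real.cos γ ≤ 1 := Real.cos_le_one γ
  have ht0 : 0 ≤ t := Real.sqrt_nonneg _
  have ht1 : t ≤ 1 := by
    have h1 : t ≤ Real.sqrt 1 := Real.sqrt_le_sqrt (by linarith)
    simpa using h1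
  have htsq : t^2 = (1 - Real.cos γ)/2 := Real.sq_sqrt (by linarith)
  -- |1 - e| = 2 t
  have habse : ‖1 - e‖ = 2 * t := by
    have h1 : (1 : ℂ) - e = Complex.ofReal (1 - Real.cos γ) + Complex.ofReal (- Real.sin γ) * Complex.I := by
      rw [he, mul_comm, Complex.exp_mul_I, ← Complex.ofReal_cos, ← Complex.ofReal_sin]
      push_cast; ring
    have h2 : ‖1 - e‖ ^ 2 = 2 - 2 * Real.cos γ := by
      rw [Complex.sq_norm, h1, Complex.normSq_add_mul_I]
      nlinarith [Real.sin_sq_add_cos_sq γ]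
    have h3 : (2*t)^2 = 2 - 2*Real.cos γ := by rw [mul_pow, htsq]; ring
    nlinarith [norm_nonneg (1 - e), ht0]
  -- norms of images
  have hUnorm : ∀ x : H, ‖U x‖ = ‖x‖ := by
    intro x
    have h := hU_inner x x
    rw [inner_self_eq_norm_sq_to_K, inner_self_eq_norm_sq_to_K] at h
    have h' : (‖U x‖^2 : ℝ) = ‖x‖^2 := by exact_mod_cast h
    nlinarith [norm_nonneg (U x), norm_nonneg x]
  have hWnorm : ∀ x : H, ‖W x‖ = ‖x‖ := by
    intro x
    have h := hW_inner x x
    rw [inner_self_eq_norm_sq_to_K, inner_self_eq_norm_sq_to_K] at h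
    have h' : (‖W x‖^2 : ℝ) = ‖x‖^2 := by exact_mod_cast h
    nlinarith [norm_nonneg (W x), norm_nonneg x]
  have hUψ2 : ⟪U ψ, U ψ⟫_ℂ = 1 := by rw [hU_inner]; exact hψ2
  have hWψ2 : ⟪W ψ, W ψ⟫_ℂ = 1 := by rw [hW_inner]; exact hψ2
  -- a, b
  set a : ℝ := ‖u‖ with ha
  set b : ℝ := ‖w‖ with hb
  have ha0 : 0 ≤ a := norm_nonneg u
  have hb0 : 0 ≤ b := norm_nonneg w
  have ha1 : a ≤ 1 := by
    have h := norm_inner_le_norm (𝕜 := ℂ) ψ (U ψ)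
    rw [hψ, hUnorm, hψ] at h
    simpa [ha, hu] using h
  have hb1 : b ≤ 1 := by
    have h := norm_inner_le_norm (𝕜 := ℂ) ψ (W ψ)
    rw [hψ, hWnorm, hψ] at h
    simpa [hb, hw] using h
  -- residuals
  set r : H := W ψ - w • ψ with hr
  set r' : H := U ψ - u • ψ with hr'
  set z : H := ψ - (starRingEnd ℂ) u • (U ψ) with hz
  set zw : H := ψ - (starRingEnd ℂ) w • (W ψ) with hzw
  have hinner_r : ⟪ψ, r⟫_ℂ = 0 := by
    rw [hr, inner_sub_right, inner_smul_right, hψ2, ← hw]; ring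
  have hinner_r' : ⟪ψ, r'⟫_ℂ = 0 := by
    rw [hr', inner_sub_right, inner_smul_right, hψ2, ← hu]; ring
  -- norm computations via helper
  have hnr : ‖r‖^2 = 1 - b^2 := by
    have h := aux_norm_residual ψ (W ψ) hψ2 hWψ2
    rw [← hw, ← hb] at h
    simpa [hr] using h
  have hnr' : ‖r'‖^2 = 1 - a^2 := by
    have h := aux_norm_residual ψ (U ψ) hψ2 hUψ2
    rw [← hu, ← ha] at h
    simpa [hr'] using h
  have hcu : ⟪U ψ, ψ⟫_ℂ = (starRingEnd ℂ) u := by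
    rw [hu, inner_conj_symm]
  have hcw : ⟪W ψ, ψ⟫_ℂ = (starRingEnd ℂ) w := by
    rw [hw, inner_conj_symm]
  have hnz : ‖z‖^2 = 1 - a^2 := by
    have h := aux_norm_residual (U ψ) ψ hUψ2 hψ2
    rw [hcu] at h
    rw [Complex.norm_conj, ← ha] at h
    simpa [hz] using h
  have hnzw : ‖zw‖^2 = 1 - b^2 := by
    have h := aux_norm_residual (W ψ) ψ hWψ2 hψ2
    rw [hcw] at h
    rw [Complex.norm_conj, ← hb] at h
    simpa [hzw] using h
  -- key algebraic identity
  have hUW : U (W ψ) = e • (W (U ψ)) := by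
    have h := congrArg (fun T : H →L[ℂ] H => T ψ) hWeyl
    simpa using h
  have h1 : U (W ψ) = w • U ψ + U r := by
    have hWψ : W ψ = w • ψ + r := by rw [hr]; abel
    rw [hWψ, map_add, map_smul]
  have h2 : W (U ψ) = u • W ψ + W r' := by
    have hUψ : U ψ = u • ψ + r' := by rw [hr']; abel
    rw [hUψ, map_add, map_smul]
  have hident : w * u + ⟪ψ, U r⟫_ℂ = e * (u * w + ⟪ψ, W r'⟫_ℂ) := by
    have c1 : ⟪ψ, U (W ψ)⟫_ℂ = w * u + ⟪ψ, U r⟫_ℂ := by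
      rw [h1, inner_add_right, inner_smul_right, ← hu]
    have c2 : ⟪ψ, e • W (U ψ)⟫_ℂ = e * (u * w + ⟪ψ, W r'⟫_ℂ) := by
      rw [inner_smul_right, h2, inner_add_right, inner_smul_right, ← hw]
    rw [← c1, ← c2, hUW]
  have hmain : (1 - e) * (u * w) = e * ⟪ψ, W r'⟫_ℂ - ⟪ψ, U r⟫_ℂ := by
    linear_combination hident
  -- Cauchy–Schwarz bounds
  have hzUr : ⟪ψ, U r⟫_ℂ = ⟪z, U r⟫_ℂ := by
    rw [hz, inner_sub_left, inner_smul_left, starRingEnd_self_apply, hU_inner, hinner_r]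
    ring
  have hzwWr' : ⟪ψ, W r'⟫_ℂ = ⟪zw, W r'⟫_ℂ := by
    rw [hzw, inner_sub_left, inner_smul_left, starRingEnd_self_apply, hW_inner, hinner_r']
    ring
  have hbound1 : ‖⟪ψ, U r⟫_ℂ‖ ≤ ‖z‖ * ‖r‖ := by
    rw [hzUr, ← hUnorm r]
    exact norm_inner_le_norm z (U r)
  have hbound2 : ‖⟪ψ, W r'⟫_ℂ‖ ≤ ‖zw‖ * ‖r'‖ := by
    rw [hzwWr', ← hWnorm r']
    exact norm_inner_le_norm zw (W r')
  have habse1 : ‖e‖ = 1 := by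
    rw [he, Complex.norm_exp]
    simp [Complex.mul_re]
  -- equalities of norms
  have hzeq : ‖z‖ = ‖r'‖ := by
    have h := hnz.trans hnr'.symm
    nlinarith [norm_nonneg z, norm_nonneg r']
  have hzweq : ‖zw‖ = ‖r‖ := by
    have h := hnzw.trans hnr.symm
    nlinarith [norm_nonneg zw, norm_nonneg r]
  -- the key inequality
  have hkey1 : 2 * t * (a * b) ≤ 2 * (‖z‖ * ‖r‖) := by
    have e1 : ‖(1 - e) * (u * w)‖ = 2 * t * (a * b) := by
      rw [norm_mul, norm_mul, habse, ← ha, ← hb]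
    have e2 : ‖(1 - e) * (u * w)‖ ≤ 2 * (‖z‖ * ‖r‖) := by
      rw [hmain]
      calc ‖e * ⟪ψ, W r'⟫_ℂ - ⟪ψ, U r⟫_ℂ‖
          ≤ ‖e * ⟪ψ, W r'⟫_ℂ‖ + ‖⟪ψ, U r⟫_ℂ‖ := by
            have := norm_sub_le (e * ⟪ψ, W r'⟫_ℂ) ⟪ψ, U r⟫_ℂ
            simpa using this
        _ = ‖⟪ψ, W r'⟫_ℂ‖ + ‖⟪ψ, U r⟫_ℂ‖ := by
            rw [norm_mul, habse1, one_mul]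
        _ ≤ ‖zw‖ * ‖r'‖ + ‖z‖ * ‖r‖ := add_le_add hbound2 hbound1
        _ = 2 * (‖z‖ * ‖r‖) := by rw [hzweq, ← hzeq]; ring
    rw [← e1]; exact e2
  have hkey2 : t^2 * (a^2 * b^2) ≤ (1 - a^2) * (1 - b^2) := by
    have h5 : t * (a*b) ≤ ‖z‖ * ‖r‖ := by linarith
    have h6 : 0 ≤ t * (a*b) := by positivity
    have h7 := mul_self_le_mul_self h6 h5
    calc t^2 * (a^2*b^2) = (t*(a*b)) * (t*(a*b)) := by ring
      _ ≤ (‖z‖*‖r‖) * (‖z‖*‖r‖) := h7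
      _ = ‖z‖^2 * ‖r‖^2 := by ring
      _ = (1-a^2)*(1-b^2) := by rw [hnz, hnr]
  have hfin := aux_quad t (a^2) (b^2) ht0 ht1 (by positivity) (by nlinarith) (by positivity)
      (by nlinarith) (by nlinarith [hkey2])
  exact hfin
end

section
/- Let H be a complex Hilbert space, let U and W be unitary operators on H with U∘W = e^{iγ}·(W∘U) for some real γ, and let ψ ∈ H be a unit vector. Set Λ = |⟨ψ, Uψ⟩|² + |⟨ψ, Wψ⟩|², Ω = ⟨Uψ, Wψ⟩, and z = |1 + e^{iγ}|/2. If z·|Ω| < 1, then Λ ≤ (1 − |Ω|²)/(1 − z·|Ω|). -/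
open scoped InnerProductSpace

lemma gram3 {H : Type*} [NormedAddCommGroup H] [InnerProductSpace ℂ H]
    (ψ u w : H) (hψ : ‖ψ‖ = 1) (hu : ‖u‖ = 1) (hw : ‖w‖ = 1) :
    ‖⟪ψ, u⟫_ℂ‖ ^ 2 + ‖⟪ψ, w⟫_ℂ‖ ^ 2 ≤
      1 - ‖⟪u, w⟫_ℂ‖ ^ 2 +
        2 * (⟪u, w⟫_ℂ * ⟪ψ, u⟫_ℂ * (starRingEnd ℂ) ⟪ψ, w⟫_ℂ).re := by
  set a := ⟪ψ, u⟫_ℂ with ha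
  set b := ⟪ψ, w⟫_ℂ with hb
  set Ω := ⟪u, w⟫_ℂ with hΩ
  have hψψ : ⟪ψ, ψ⟫_ℂ = 1 := by
    rw [inner_self_eq_norm_sq_to_K, hψ]; norm_num
  have huu : ⟪u, u⟫_ℂ = 1 := by
    rw [inner_self_eq_norm_sq_to_K, hu]; norm_num
  have hww : ⟪w, w⟫_ℂ = 1 := by
    rw [inner_self_eq_norm_sq_to_K, hw]; norm_num
  have huψ : ⟪u, ψ⟫_ℂ = starRingEnd ℂ a := by rw [ha, inner_conj_symm]
  have hwψ : ⟪w, ψ⟫_ℂ = starRingEnd ℂ b := by rw [hb, inner_conj_symm]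
  have h1 : ⟪u - a • ψ, w - b • ψ⟫_ℂ = Ω - starRingEnd ℂ a * b := by
    simp [inner_sub_left, inner_sub_right, inner_smul_left, inner_smul_right,
      hψψ, huψ, hwψ, hψ, ← ha, ← hb, ← hΩ, mul_comm]
  have h2 : ‖u - a • ψ‖ ^ 2 = 1 - ‖a‖ ^ 2 := by
    have e : ⟪u - a • ψ, u - a • ψ⟫_ℂ = 1 - (Complex.normSq a : ℂ) := by
      simp only [inner_sub_left, inner_sub_right, inner_smul_left, inner_smul_right,
        hψψ, huψ, huu, ← ha, Complex.normSq_eq_conj_mul_self]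
      ring
    rw [← @inner_self_eq_norm_sq ℂ, e]
    simp [Complex.sq_norm]
  have h3 : ‖w - b • ψ‖ ^ 2 = 1 - ‖b‖ ^ 2 := by
    have e : ⟪w - b • ψ, w - b • ψ⟫_ℂ = 1 - (Complex.normSq b : ℂ) := by
      simp only [inner_sub_left, inner_sub_right, inner_smul_left, inner_smul_right,
        hψψ, hwψ, hww, ← hb, Complex.normSq_eq_conj_mul_self]
      ring
    rw [← @inner_self_eq_norm_sq ℂ, e]
    simp [Complex.sq_norm]
  have hcs : ‖Ω - starRingEnd ℂ a * b‖ ^ 2 ≤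
      (1 - ‖a‖ ^ 2) * (1 - ‖b‖ ^ 2) := by
    have h := norm_inner_le_norm (𝕜 := ℂ) (u - a • ψ) (w - b • ψ)
    rw [h1] at h
    calc ‖Ω - starRingEnd ℂ a * b‖ ^ 2
        ≤ (‖u - a • ψ‖ * ‖w - b • ψ‖) ^ 2 := by
          exact pow_le_pow_left₀ (norm_nonneg _) h 2
      _ = ‖u - a • ψ‖ ^ 2 * ‖w - b • ψ‖ ^ 2 := by ring
      _ = (1 - ‖a‖ ^ 2) * (1 - ‖b‖ ^ 2) := by rw [h2, h3]
  have hexp : ‖Ω - starRingEnd ℂ a * b‖ ^ 2 =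
      ‖Ω‖ ^ 2 + ‖a‖ ^ 2 * ‖b‖ ^ 2 -
        2 * (Ω * a * starRingEnd ℂ b).re := by
    rw [Complex.sq_norm, Complex.normSq_sub]
    simp only [Complex.sq_norm, Complex.normSq_mul, Complex.normSq_conj, map_mul,
      Complex.conj_conj]
    ring_nf
  nlinarith [hcs, hexp]

/-- **Intermediate inequality in the proof of the ChUR.**
With `Λ = |⟨ψ,Uψ⟩|² + |⟨ψ,Wψ⟩|²`, `Ω = ⟨Uψ, Wψ⟩` and `z = |1 + e^{iγ}|/2`, the
averaged Gram-determinant condition gives `Λ ≤ (1 − |Ω|²)/(1 − z·|Ω|)`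
whenever `z·|Ω| < 1`. -/
theorem weyl_pair_intermediate_bound
    {H : Type*} [NormedAddCommGroup H] [InnerProductSpace ℂ H] [CompleteSpace H]
    (U W : H →L[ℂ] H)
    (hU_inner : ∀ x y : H, ⟪U x, U y⟫_ℂ = ⟪x, y⟫_ℂ) (hU_surj : Function.Surjective U)
    (hW_inner : ∀ x y : H, ⟪W x, W y⟫_ℂ = ⟪x, y⟫_ℂ) (hW_surj : Function.Surjective W)
    (γ : ℝ)
    (hWeyl : U ∘L W = Complex.exp (Complex.I * γ) • (W ∘L U))
    (ψ : H) (hψ : ‖ψ‖ = 1)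
    (Λ : ℝ) (hΛ : Λ = ‖⟪ψ, U ψ⟫_ℂ‖ ^ 2 + ‖⟪ψ, W ψ⟫_ℂ‖ ^ 2)
    (Ω : ℂ) (hΩ : Ω = ⟪U ψ, W ψ⟫_ℂ)
    (z : ℝ) (hz : z = ‖1 + Complex.exp (Complex.I * γ)‖ / 2)
    (hzΩ : z * ‖Ω‖ < 1) :
    Λ ≤ (1 - ‖Ω‖ ^ 2) / (1 - z * ‖Ω‖) := by
  set c := Complex.exp (Complex.I * γ) with hc
  have hc0 : c ≠ 0 := Complex.exp_ne_zero _
  have hcabs : ‖c‖ = 1 := by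
    rw [hc, Complex.norm_exp]; simp
  have hnorm : ∀ (T : H →L[ℂ] H), (∀ x y : H, ⟪T x, T y⟫_ℂ = ⟪x, y⟫_ℂ) →
      ∀ x : H, ‖T x‖ = ‖x‖ := by
    intro T hT x
    rw [norm_eq_sqrt_re_inner (𝕜 := ℂ) (T x), norm_eq_sqrt_re_inner (𝕜 := ℂ) x, hT]
  set A := ContinuousLinearMap.adjoint U with hA
  set B := ContinuousLinearMap.adjoint W with hB
  have hAU : ∀ x, A (U x) = x := by
    intro x
    apply ext_inner_right ℂ
    intro v
    rw [hA, ContinuousLinearMap.adjoint_inner_left, hU_inner]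
  have hBW : ∀ x, B (W x) = x := by
    intro x
    apply ext_inner_right ℂ
    intro v
    rw [hB, ContinuousLinearMap.adjoint_inner_left, hW_inner]
  have hUA : ∀ x, U (A x) = x := by
    intro x
    obtain ⟨v, rfl⟩ := hU_surj x
    rw [hAU]
  have hWB : ∀ x, W (B x) = x := by
    intro x
    obtain ⟨v, rfl⟩ := hW_surj x
    rw [hBW]
  have hA_inner : ∀ x y : H, ⟪A x, A y⟫_ℂ = ⟪x, y⟫_ℂ := by
    intro x y
    rw [hA, ContinuousLinearMap.adjoint_inner_left, hUA]
  have hB_inner : ∀ x y : H, ⟪B x, B y⟫_ℂ = ⟪x, y⟫_ℂ := by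
    intro x y
    rw [hB, ContinuousLinearMap.adjoint_inner_left, hWB]
  have hpt : ∀ x, U (W x) = c • W (U x) := by
    intro x
    have := congrArg (fun T : H →L[ℂ] H => T x) hWeyl
    simpa using this
  have hUB : ∀ x, U (B x) = c⁻¹ • B (U x) := by
    intro x
    have h1 : B (U x) = c • U (B x) := by
      conv_lhs => rw [← hWB x]
      rw [hpt (B x), map_smul, hBW]
    rw [h1, smul_smul, inv_mul_cancel₀ hc0, one_smul]
  -- abbreviations
  set a := ⟪ψ, U ψ⟫_ℂ with ha
  set b := ⟪ψ, W ψ⟫_ℂ with hb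
  -- first Gram inequality
  have ineq1 : ‖a‖ ^ 2 + ‖b‖ ^ 2 ≤
      1 - ‖Ω‖ ^ 2 + 2 * (Ω * a * (starRingEnd ℂ) b).re := by
    have := gram3 ψ (U ψ) (W ψ) hψ (by rw [hnorm U hU_inner, hψ]) (by rw [hnorm W hW_inner, hψ])
    rw [← ha, ← hb, ← hΩ] at this
    exact this
  -- second Gram inequality with adjoints
  have hψA : ⟪ψ, A ψ⟫_ℂ = (starRingEnd ℂ) a := by
    rw [hA, ContinuousLinearMap.adjoint_inner_right, ← inner_conj_symm, ← ha]
  have hψB : ⟪ψ, B ψ⟫_ℂ = (starRingEnd ℂ) b := by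
    rw [hB, ContinuousLinearMap.adjoint_inner_right, ← inner_conj_symm, ← hb]
  have hAB : ⟪A ψ, B ψ⟫_ℂ = c⁻¹ * (starRingEnd ℂ) Ω := by
    rw [hA, ContinuousLinearMap.adjoint_inner_left, hUB, inner_smul_right]
    congr 1
    rw [hB, ContinuousLinearMap.adjoint_inner_right, ← inner_conj_symm, hΩ]
  have hconjc : (starRingEnd ℂ) c = c⁻¹ := by
    have h1 : (starRingEnd ℂ) c * c = 1 := by
      rw [← Complex.normSq_eq_conj_mul_self, ← Complex.sq_norm, hcabs]
      norm_num
    exact eq_inv_of_mul_eq_one_left h1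
  have ineq2 : ‖a‖ ^ 2 + ‖b‖ ^ 2 ≤
      1 - ‖Ω‖ ^ 2 + 2 * (c * (Ω * a * (starRingEnd ℂ) b)).re := by
    have hg := gram3 ψ (A ψ) (B ψ) hψ (by rw [hnorm A hA_inner, hψ]) (by rw [hnorm B hB_inner, hψ])
    rw [hψA, hψB, hAB] at hg
    have e1 : ‖(starRingEnd ℂ) a‖ = ‖a‖ := by simp
    have e2 : ‖(starRingEnd ℂ) b‖ = ‖b‖ := by simp
    have e3 : ‖c⁻¹ * (starRingEnd ℂ) Ω‖ = ‖Ω‖ := by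
      simp [map_mul, map_inv₀, hcabs]
    have e4 : (c⁻¹ * (starRingEnd ℂ) Ω * (starRingEnd ℂ) a *
        (starRingEnd ℂ) ((starRingEnd ℂ) b)).re = (c * (Ω * a * (starRingEnd ℂ) b)).re := by
      rw [Complex.conj_conj, ← hconjc]
      rw [← Complex.conj_re (c * (Ω * a * (starRingEnd ℂ) b))]
      congr 1
      simp only [map_mul, Complex.conj_conj]
      ring
    rw [e1, e2, e3, e4] at hg
    exact hg
  -- combine
  have hX : (Ω * a * (starRingEnd ℂ) b).re + (c * (Ω * a * (starRingEnd ℂ) b)).re =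
      ((1 + c) * (Ω * a * (starRingEnd ℂ) b)).re := by
    rw [add_mul, one_mul, Complex.add_re]
  have hre : ((1 + c) * (Ω * a * (starRingEnd ℂ) b)).re ≤
      (2 * z) * (‖Ω‖ * (‖a‖ * ‖b‖)) := by
    calc ((1 + c) * (Ω * a * (starRingEnd ℂ) b)).re
        ≤ ‖(1 + c) * (Ω * a * (starRingEnd ℂ) b)‖ := Complex.re_le_norm _
      _ = ‖1 + c‖ * (‖Ω‖ * (‖a‖ * ‖b‖)) := by
          rw [norm_mul, norm_mul, norm_mul, Complex.norm_conj]; ring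
      _ = (2 * z) * (‖Ω‖ * (‖a‖ * ‖b‖)) := by
          rw [hz]; ring
  have hz0 : 0 ≤ z := by rw [hz]; positivity
  have hΩ0 : 0 ≤ ‖Ω‖ := norm_nonneg _
  have hab : 2 * (‖a‖ * ‖b‖) ≤ ‖a‖ ^ 2 + ‖b‖ ^ 2 := by
    nlinarith [sq_nonneg (‖a‖ - ‖b‖)]
  have hmul : (z * ‖Ω‖) * (2 * (‖a‖ * ‖b‖)) ≤
      (z * ‖Ω‖) * (‖a‖ ^ 2 + ‖b‖ ^ 2) :=
    mul_le_mul_of_nonneg_left hab (by positivity)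
  have hkey : Λ ≤ 1 - ‖Ω‖ ^ 2 + (z * ‖Ω‖) * Λ := by
    rw [hΛ]
    nlinarith [ineq1, ineq2, hX, hre, hmul]
  rw [le_div_iff₀ (by linarith)]
  nlinarith [hkey]
end

section
/- Let c ≥ 0 be a real number such that 2 − a·c ≤ B(a) for all a > 0, where B(a) = 2/(1 + √((1 − cos a)/2)). Then c ≥ 1. -/
/-- **Extraction lemma for the Heisenberg bound.**
If `c ≥ 0` satisfies `2 − a·c ≤ B(a)` for all `a > 0`, where
`B(a) = 2/(1 + √((1 − cos a)/2))`, then `c ≥ 1`. -/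
theorem extraction_lemma (c : ℝ) (hc : 0 ≤ c)
    (h : ∀ a : ℝ, 0 < a → 2 - a * c ≤ 2 / (1 + Real.sqrt ((1 - Real.cos a) / 2))) :
    1 ≤ c := by
  by_contra hlt
  push_neg at hlt
  obtain ⟨a, ha_def⟩ : ∃ a : ℝ, a = 1 - c := ⟨1 - c, rfl⟩
  have ha : 0 < a := by linarith
  have ha1 : a ≤ 1 := by linarith
  obtain ⟨s, hs_def⟩ : ∃ s : ℝ, s = Real.sin (a / 2) := ⟨_, rfl⟩
  have hs_pos : 0 < s := by
    rw [hs_def]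
    exact Real.sin_pos_of_pos_of_lt_pi (by linarith)
      (by have := Real.pi_gt_three; linarith)
  have hs_le : s ≤ a / 2 := by rw [hs_def]; exact Real.sin_le (by linarith)
  have hs_gt : a / 2 - (a / 2) ^ 3 / 4 < s := by
    rw [hs_def]; have := Real.sin_gt_sub_cube (x := a / 2) (by linarith); nlinarith [pow_pos (half_pos ha) 3]
  have hsqrt : Real.sqrt ((1 - Real.cos a) / 2) = s := by
    have h1 : (1 - Real.cos a) / 2 = s ^ 2 := by
      rw [hs_def, Real.sin_sq_eq_half_sub, show 2 * (a / 2) = a by ring]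
      ring
    rw [h1, Real.sqrt_sq hs_pos.le]
  have hkey := h a ha
  rw [hsqrt] at hkey
  have h1s : 0 < 1 + s := by linarith
  rw [le_div_iff₀ h1s] at hkey
  have h2 : 2 * s ≤ a * c * (1 + s) := by nlinarith [hkey]
  have h3 : a * c * (1 + s) ≤ a * c * (1 + a / 2) :=
    mul_le_mul_of_nonneg_left (by linarith) (mul_nonneg ha.le hc)
  have h4 : a - a ^ 3 / 16 < 2 * s := by nlinarith [hs_gt]
  have hca : c = 1 - a := by linarith
  have h5 : a - a ^ 3 / 16 < a * (1 - a) * (1 + a / 2) := by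
    rw [← hca]; linarith
  nlinarith [h5, mul_pos ha ha, mul_pos (mul_pos ha ha) ha]
end

section
/- Let σₓ > 0 and σ_p > 0 be real numbers such that for every b > 0 and every a > 0 one has 2 − a·(σₓ²/b² + b²σ_p²) ≤ B(a), where B(a) = 2/(1 + √((1 − cos a)/2)). Then σₓ·σ_p ≥ 1/2. -/
open Real Filter Topology

private lemma sin_div_tendsto : Tendsto (fun a : ℝ => Real.sin (a / 2) / a) (𝓝[>] 0) (𝓝 (1 / 2)) := by
  have h1 : Tendsto (fun x : ℝ => Real.sin x / x) (𝓝[≠] (0:ℝ)) (𝓝 1) := by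
    have := hasDerivAt_iff_tendsto_slope.mp (Real.hasDerivAt_sin 0)
    rw [Real.cos_zero] at this
    refine this.congr ?_
    intro x
    simp [slope_fun_def, div_eq_inv_mul]
  have h2 : Tendsto (fun a : ℝ => a / 2) (𝓝[≠] (0:ℝ)) (𝓝[≠] (0:ℝ)) := by
    apply tendsto_nhdsWithin_of_tendsto_nhds_of_eventually_within
    · have hc : Tendsto (fun a : ℝ => a / 2) (𝓝 (0:ℝ)) (𝓝 ((0:ℝ) / 2)) :=
        (tendsto_id (α := ℝ)).div_const 2
      simpa using hc.mono_left nhdsWithin_le_nhds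
    · filter_upwards [self_mem_nhdsWithin] with a ha
      simp only [Set.mem_compl_iff, Set.mem_singleton_iff] at ha ⊢
      positivity
  have h3 : Tendsto (fun a : ℝ => Real.sin (a / 2) / (a / 2)) (𝓝[≠] (0:ℝ)) (𝓝 1) :=
    h1.comp h2
  have h4 : Tendsto (fun a : ℝ => Real.sin (a / 2) / (a / 2) * (1/2)) (𝓝[≠] (0:ℝ))
      (𝓝 (1/2)) := by simpa using h3.mul_const (1/2 : ℝ)
  have heq : ∀ a : ℝ, a ≠ 0 → Real.sin (a / 2) / (a / 2) * (1/2) = Real.sin (a / 2) / a := by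
    intro a ha; field_simp
  have h5 : Tendsto (fun a : ℝ => Real.sin (a / 2) / a) (𝓝[≠] (0:ℝ)) (𝓝 (1/2)) := by
    apply h4.congr'
    filter_upwards [self_mem_nhdsWithin] with a ha
    exact heq a ha
  exact h5.mono_left (nhdsWithin_mono _ (fun x hx => ne_of_gt hx))

/-- **The ChUR implies the Heisenberg uncertainty relation.**
If `σₓ, σ_p > 0` satisfy the weakened characteristic-function uncertainty relation
`2 − a·(σₓ²/b² + b²σ_p²) ≤ B(a)` for all `a, b > 0`, where
`B(a) = 2/(1 + √((1 − cos a)/2))`, then `σₓ·σ_p ≥ 1/2`. -/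
theorem chur_implies_heisenberg (σx σp : ℝ) (hσx : 0 < σx) (hσp : 0 < σp)
    (h : ∀ b : ℝ, 0 < b → ∀ a : ℝ, 0 < a →
      2 - a * (σx ^ 2 / b ^ 2 + b ^ 2 * σp ^ 2)
        ≤ 2 / (1 + Real.sqrt ((1 - Real.cos a) / 2))) :
    σx * σp ≥ 1 / 2 := by
  -- choose b = √(σx/σp)
  set b : ℝ := Real.sqrt (σx / σp) with hb
  have hbpos : 0 < b := Real.sqrt_pos.mpr (by positivity)
  have hb2 : b ^ 2 = σx / σp := Real.sq_sqrt (div_nonneg hσx.le hσp.le)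
  have key : ∀ a : ℝ, 0 < a → 2 - a * (2 * (σx * σp))
      ≤ 2 / (1 + Real.sqrt ((1 - Real.cos a) / 2)) := by
    intro a ha
    have := h b hbpos a ha
    have hrw : σx ^ 2 / b ^ 2 + b ^ 2 * σp ^ 2 = 2 * (σx * σp) := by
      rw [hb2]; field_simp; ring
    rwa [hrw] at this
  -- from key: for 0 < a ≤ π, σx*σp ≥ sin(a/2)/a * (1/(1+sin(a/2)))
  have main : ∀ a : ℝ, 0 < a → a ≤ π →
      Real.sin (a / 2) / a * (1 / (1 + Real.sin (a / 2))) ≤ σx * σp := by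
    intro a ha hapi
    have hs : Real.sqrt ((1 - Real.cos a) / 2) = Real.sin (a / 2) :=
      (Real.sin_half_eq_sqrt ha.le (by linarith [Real.pi_pos])).symm
    have hk := key a ha
    rw [hs] at hk
    have hsin : 0 ≤ Real.sin (a / 2) := Real.sin_nonneg_of_nonneg_of_le_pi
      (by linarith) (by linarith [Real.pi_pos])
    have h1s : 0 < 1 + Real.sin (a / 2) := by linarith
    rw [le_div_iff₀ h1s] at hk
    -- hk : (2 - a*(2*(σx*σp))) * (1 + sin (a/2)) ≤ 2
    have ht : (1 + Real.sin (a / 2)) * (1 / (1 + Real.sin (a / 2))) = 1 :=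
      mul_one_div_cancel h1s.ne'
    rw [div_mul_eq_mul_div, div_le_iff₀ ha]
    nlinarith [hk, ht, h1s, hsin, ha]
  -- take the limit a → 0+
  have htend : Tendsto (fun a : ℝ => Real.sin (a / 2) / a * (1 / (1 + Real.sin (a / 2))))
      (𝓝[>] 0) (𝓝 (1 / 2)) := by
    have h2 : Tendsto (fun a : ℝ => 1 / (1 + Real.sin (a / 2))) (𝓝[>] (0:ℝ)) (𝓝 1) := by
      have : ContinuousAt (fun a : ℝ => 1 / (1 + Real.sin (a / 2))) 0 := by
        apply ContinuousAt.div continuousAt_const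
        · fun_prop
        · simp
      simpa using this.continuousWithinAt.tendsto
    simpa using sin_div_tendsto.mul h2
  refine le_of_tendsto htend ?_
  filter_upwards [Ioo_mem_nhdsGT_of_mem (by simp [Real.pi_pos] :
    (0:ℝ) ∈ Set.Ico 0 π)] with a ha
  exact main a ha.1 ha.2.le
end
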